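/- For every real number z > 0, the exponential integral E₁(z) = ∫_z^∞ e^{-t}/t dt satisfies E₁(z) < e^{-z} · ln(1 + 1/z). -/

import Mathlib

open Real MeasureTheory Set Filter

private lemma f_cont : ContinuousOn (fun t : ℝ => Real.exp (-t) / t) {0}ᶜ := by
  apply ContinuousOn.div (Real.continuous_exp.comp continuous_neg).continuousOn
    continuousOn_id
  intro x hx; exact hx

private lemma f_intOn {a : ℝ} (ha : 0 < a) :
    IntegrableOn (fun t : ℝ => Real.exp (-t) / t) (Set.Ioi a) := by
  have hg : IntegrableOn (fun t : ℝ => Real.exp (-t) / a) (Set.Ioi a) := by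
    simpa [neg_one_mul, div_eq_mul_inv, IntegrableOn] using
      (exp_neg_integrableOn_Ioi a one_pos).mul_const a⁻¹
  refine hg.mono' ?_ ?_
  · exact ((Real.continuous_exp.comp continuous_neg).measurable.div
      measurable_id).aestronglyMeasurable.restrict
  · filter_upwards [ae_restrict_mem measurableSet_Ioi] with t ht
    have hta : a < t := ht
    have ht0 : 0 < t := ha.trans hta
    rw [Real.norm_eq_abs, abs_of_nonneg (by positivity)]
    exact div_le_div_of_nonneg_left (Real.exp_pos _).le ha hta.le

theorem exp_integral_lt (z : ℝ) (hz : 0 < z) :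
    (∫ t in Set.Ioi z, Real.exp (-t) / t) < Real.exp (-z) * Real.log (1 + 1 / z) := by
  set f : ℝ → ℝ := fun t => Real.exp (-t) / t with hf
  set E : ℝ → ℝ := fun x => ∫ t in Set.Ioi x, f t with hE
  set F : ℝ → ℝ := fun x => Real.exp (-x) * Real.log (1 + 1 / x) - E x with hF
  have hz2 : 0 < z / 2 := by positivity
  -- split identity
  have hsplit : ∀ x, z / 2 < x → E x = E (z / 2) - ∫ t in (z/2)..x, f t := by
    intro x hx
    have hzx : z / 2 ≤ x := hx.le
    have hu : Set.Ioc (z/2) x ∪ Set.Ioi x = Set.Ioi (z/2) := Set.Ioc_union_Ioi_eq_Ioi hzx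
    have h1 : IntegrableOn f (Set.Ioc (z/2) x) := (f_intOn hz2).mono_set
      (by intro t ht; exact ht.1)
    have h2 : IntegrableOn f (Set.Ioi x) := f_intOn (hz2.trans hx)
    have := MeasureTheory.setIntegral_union (Set.Ioc_disjoint_Ioi le_rfl)
      measurableSet_Ioi h1 h2
    rw [hu] at this
    rw [intervalIntegral.integral_of_le hzx]
    simp only [hE]
    rw [this]; ring
  -- derivative of E
  have hE' : ∀ x, z ≤ x → HasDerivAt E (-(f x)) x := by
    intro x hx
    have hx0 : 0 < x := hz.trans_le hx
    have hint : IntervalIntegrable f volume (z/2) x := by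
      apply ContinuousOn.intervalIntegrable
      apply f_cont.mono
      intro t ht
      rw [Set.uIcc_of_le (by linarith)] at ht
      exact ne_of_gt (lt_of_lt_of_le hz2 ht.1)
    have hmeas : StronglyMeasurableAtFilter f (nhds x) :=
      ((Real.continuous_exp.comp continuous_neg).measurable.div
        measurable_id).stronglyMeasurable.stronglyMeasurableAtFilter
    have hcont : ContinuousAt f x :=
      f_cont.continuousAt (by simpa using (isOpen_compl_singleton).mem_nhds (ne_of_gt hx0))
    have hG := intervalIntegral.integral_hasDerivAt_right hint hmeas hcont
    have := (hG.const_sub (E (z/2)))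
    refine this.congr_of_eventuallyEq ?_
    filter_upwards [eventually_gt_nhds (show z/2 < x by linarith)] with y hy
    exact hsplit y hy
  -- derivative of F and strict antitonicity
  have hF' : ∀ x, z ≤ x →
      HasDerivAt F (Real.exp (-x) * (1 / (x + 1) - Real.log (1 + 1 / x))) x := by
    intro x hx
    have hx0 : 0 < x := hz.trans_le hx
    have h1 : HasDerivAt (fun y : ℝ => Real.exp (-y)) (-Real.exp (-x)) x := by
      simpa using (hasDerivAt_neg x).exp
    have h2 : HasDerivAt (fun y : ℝ => 1 + 1 / y) (-(x ^ 2)⁻¹) x := by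
      simpa [one_div] using (hasDerivAt_inv (ne_of_gt hx0)).const_add 1
    have hpos : 0 < 1 + 1 / x := by positivity
    have h3 : HasDerivAt (fun y : ℝ => Real.log (1 + 1 / y))
        (-(x ^ 2)⁻¹ / (1 + 1 / x)) x := h2.log (ne_of_gt hpos)
    have h4 := h1.mul h3
    have h5 := h4.sub (hE' x hx)
    refine h5.congr_deriv ?_
    have hx1 : (0:ℝ) < x + 1 := by linarith
    simp only [hf]
    field_simp
    ring
  have hneg : ∀ x, z < x → Real.exp (-x) * (1 / (x + 1) - Real.log (1 + 1 / x)) < 0 := by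
    intro x hx
    have hx0 : 0 < x := hz.trans hx
    have hx1 : (0:ℝ) < x + 1 := by linarith
    have key : 1 / (x + 1) < Real.log (1 + 1 / x) := by
      have h := Real.log_lt_sub_one_of_pos (x := x / (x + 1)) (by positivity)
        (by intro h; field_simp at h; linarith)
      have heq : Real.log (1 + 1 / x) = -Real.log (x / (x + 1)) := by
        rw [← Real.log_inv]
        congr 1
        field_simp
      rw [heq]
      have : x / (x + 1) - 1 = -(1 / (x + 1)) := by field_simp; ring
      rw [this] at h
      linarith
    have := Real.exp_pos (-x)
    nlinarith
  have hanti : StrictAntiOn F (Set.Ici z) := by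
    apply strictAntiOn_of_deriv_neg (convex_Ici z)
    · intro x hxm
      exact ((hF' x hxm).continuousAt).continuousWithinAt
    · intro x hxm
      rw [interior_Ici] at hxm
      rw [(hF' x hxm.le).deriv]
      exact hneg x hxm
  -- limit of F at infinity
  have hEtend : Tendsto E atTop (nhds 0) := by
    have hub : ∀ᶠ x in atTop, E x ≤ Real.exp (-x) / z := by
      filter_upwards [eventually_ge_atTop z] with x hx
      have hx0 : 0 < x := hz.trans_le hx
      have hmono : E x ≤ ∫ t in Set.Ioi x, Real.exp (-t) / z := by
        apply MeasureTheory.setIntegral_mono_on (f_intOn hx0)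
        · simpa [neg_one_mul, div_eq_mul_inv, IntegrableOn] using
            (exp_neg_integrableOn_Ioi x one_pos).mul_const z⁻¹
        · exact measurableSet_Ioi
        · intro t ht
          exact div_le_div_of_nonneg_left (Real.exp_pos _).le hz (hx.trans ht.le)
      calc E x ≤ ∫ t in Set.Ioi x, Real.exp (-t) / z := hmono
        _ = Real.exp (-x) / z := by
            rw [MeasureTheory.integral_div, integral_exp_neg_Ioi]
    have hlb : ∀ᶠ x in atTop, 0 ≤ E x := by
      filter_upwards [eventually_ge_atTop z] with x hx
      apply MeasureTheory.setIntegral_nonneg measurableSet_Ioi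
      intro t ht
      have : 0 < t := lt_of_le_of_lt (hz.trans_le hx).le ht
      positivity
    have h2 : Tendsto (fun x => Real.exp (-x) / z) atTop (nhds 0) := by
      simpa using Real.tendsto_exp_neg_atTop_nhds_zero.div_const z
    exact tendsto_of_tendsto_of_tendsto_of_le_of_le' tendsto_const_nhds h2 hlb hub
  have hgtend : Tendsto (fun x => Real.exp (-x) * Real.log (1 + 1 / x)) atTop (nhds 0) := by
    have h1 : Tendsto (fun x : ℝ => 1 + 1 / x) atTop (nhds 1) := by
      have := tendsto_inv_atTop_zero (𝕜 := ℝ)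
      simpa [one_div] using tendsto_const_nhds.add this
    have h2 : Tendsto (fun x : ℝ => Real.log (1 + 1 / x)) atTop (nhds 0) := by
      have := (Real.continuousAt_log (one_ne_zero)).tendsto.comp h1
      simpa [Function.comp_def] using this
    simpa using Real.tendsto_exp_neg_atTop_nhds_zero.mul h2
  have hFtend : Tendsto F atTop (nhds 0) := by
    have h := hgtend.sub hEtend
    rw [sub_zero] at h
    exact h
  -- conclude
  have h1 : 0 ≤ F (z + 1) := by
    apply le_of_tendsto hFtend
    filter_upwards [eventually_ge_atTop (z + 1)] with x hx
    rcases eq_or_lt_of_le hx with h | h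
    · exact le_of_eq (congrArg F h.symm)
    · exact (hanti (by simp : z + 1 ∈ Set.Ici z) (Set.mem_Ici.mpr (by linarith)) h).le
  have h2 : F (z + 1) < F z :=
    hanti (by simp : z ∈ Set.Ici z) (by simp : z + 1 ∈ Set.Ici z) (by linarith)
  have : 0 < F z := lt_of_le_of_lt h1 h2
  simp only [hF, hE, hf] at this
  linarith
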